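/- arXiv:1406.7571 — 4 statements merged into one kernel-verified Lean document; each statement's English description precedes it below -/
import Mathlib

section
/- The anticontinuant satisfies the recursion: [q_i, ..., q_j]* = (q_i − q_j)·[q_{i+1}, ..., q_{j-1}] − [q_{i+1}, ..., q_{j-1}]* for i < j, with [ ]* = 0 and [q]* = 0 for a single entry, where [·] is the continuant. -/
/-- The continuant of a finite sequence of integers. -/
def cont : List ℤ → ℤ
  | [] => 1
  | [a] => a
  | a :: b :: l => a * cont (b :: l) + cont l


/-- The anticontinuant `[q₀,…,q_{s-1}]* = [q₀,…,q_{s-2}] − [q₁,…,q_{s-1}]`. -/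
def anticont (l : List ℤ) : ℤ := cont l.dropLast - cont l.tail

lemma cont_snoc : ∀ (l : List ℤ) (b : ℤ), l ≠ [] →
    cont (l ++ [b]) = b * cont l + cont l.dropLast
  | [], _, h => absurd rfl h
  | [x], b, _ => by simp [cont]; ring
  | [x, y], b, _ => by simp [cont]; ring
  | (x :: y :: z :: t), b, _ => by
      have h1 := cont_snoc (y :: z :: t) b (by simp)
      have h2 := cont_snoc (z :: t) b (by simp)
      simp only [List.cons_append] at h1 h2 ⊢
      simp only [cont, h1, h2, List.dropLast]
      cases t with
      | nil => simp [cont]; ring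
      | cons w s =>
        have h3 := cont_snoc (w :: s) b (by simp)
        simp only [List.cons_append] at h3
        simp only [List.cons_append, cont, List.dropLast]
        rw [h3]; ring

/-- The recursion for anticontinuants: `[]* = 0`, `[q]* = 0`, and
`[q_i,…,q_j]* = (q_i − q_j)·[q_{i+1},…,q_{j-1}] − [q_{i+1},…,q_{j-1}]*` for `i < j`. -/
theorem anticont_recursion :
    anticont ([] : List ℤ) = 0 ∧ (∀ q : ℤ, anticont [q] = 0) ∧
      ∀ (a b : ℤ) (m : List ℤ),
        anticont (a :: (m ++ [b])) = (a - b) * cont m - anticont m := by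
  refine ⟨rfl, fun q => by simp [anticont, cont], fun a b m => ?_⟩
  have hd : (a :: (m ++ [b])).dropLast = a :: m := by
    rw [List.dropLast_cons_of_ne_nil (by simp), List.dropLast_concat]
  rw [anticont, hd, List.tail_cons]
  cases m with
  | nil => simp [anticont, cont]
  | cons x s =>
    rw [cont_snoc (x :: s) b (by simp)]
    simp only [anticont, cont, List.tail_cons]
    ring
end

section
/- If a sequence of positive integers has the form q_0, ..., q_{s-1}, x_0, ..., x_{λ-1}, q_{s-1}, ..., q_0 (a symmetric outer part around an arbitrary middle block x), then its anticontinuant equals (−1)^s times the anticontinuant of the middle block: [q_0, ..., q_{s-1}, x, q_{s-1}, ..., q_0]* = (−1)^s · [x]*. In particular, the anticontinuant of any symmetric sequence is 0. -/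
theorem cont_concat : ∀ (l : List ℤ) (a : ℤ), l ≠ [] →
    cont (l ++ [a]) = a * cont l + cont l.dropLast
  | [], _, h => absurd rfl h
  | [x], a, _ => by simp [cont]; ring
  | [x, y], a, _ => by simp [cont]; ring
  | x :: y :: z :: l, a, _ => by
      have h1 := cont_concat (y :: z :: l) a (by simp)
      have h2 := cont_concat (z :: l) a (by simp)
      show cont (x :: y :: z :: (l ++ [a])) = _
      rw [show cont (x :: y :: z :: (l ++ [a]))
            = x * cont (y :: z :: (l ++ [a])) + cont (z :: (l ++ [a])) from rfl]
      rw [show (y :: z :: (l ++ [a])) = (y :: z :: l) ++ [a] from rfl,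
        show (z :: (l ++ [a])) = (z :: l) ++ [a] from rfl, h1, h2]
      rw [show cont (x :: y :: z :: l) = x * cont (y :: z :: l) + cont (z :: l) from rfl]
      rw [show (x :: y :: z :: l).dropLast = x :: (y :: z :: l).dropLast from rfl]
      rw [show (y :: z :: l).dropLast = y :: (z :: l).dropLast from rfl]
      rw [show cont (x :: y :: (z :: l).dropLast)
            = x * cont (y :: (z :: l).dropLast) + cont ((z :: l).dropLast) from rfl]
      ring

theorem cont_reverse : ∀ l : List ℤ, cont l.reverse = cont l
  | [] => rfl
  | [x] => rfl
  | x :: y :: l => by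
      have h1 := cont_reverse (y :: l)
      have h2 := cont_reverse l
      rw [show (x :: y :: l).reverse = (y :: l).reverse ++ [x] by simp]
      rw [cont_concat _ _ (by simp)]
      rw [show (y :: l).reverse.dropLast = l.reverse by simp]
      rw [h1, h2]
      rcases l with _ | ⟨z, l⟩
      · simp [cont]
      · rfl

theorem cont_cons (q : ℤ) (l : List ℤ) (h : l ≠ []) :
    cont (q :: l) = q * cont l + cont l.tail := by
  rcases l with _ | ⟨x, l⟩
  · exact absurd rfl h
  · rfl

theorem anticont_sandwich (q : ℤ) (y : List ℤ) :
    anticont (q :: y ++ [q]) = - anticont y := by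
  rcases eq_or_ne y [] with rfl | hy
  · simp [anticont, cont]
  · have hd : (q :: y ++ [q]).dropLast = q :: y := by
      rw [show q :: y ++ [q] = (q :: y) ++ [q] from rfl, List.dropLast_concat]
    have ht : (q :: y ++ [q]).tail = y ++ [q] := rfl
    rw [anticont, hd, ht, cont_cons q y hy, cont_concat y q hy, anticont]
    ring

/-- For a symmetric outer part around a middle block:
`[q₀,…,q_{s-1}, x, q_{s-1},…,q₀]* = (−1)^s · [x]*`; in particular the anticontinuant of
any symmetric sequence is `0`. -/
theorem anticont_symmetric_outer :
    (∀ w x : List ℤ, (∀ q ∈ w, 0 < q) → (∀ q ∈ x, 0 < q) →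
      anticont (w ++ x ++ w.reverse) = (-1) ^ w.length * anticont x) ∧
    ∀ l : List ℤ, (∀ q ∈ l, 0 < q) → l.reverse = l → anticont l = 0 := by
  constructor
  · intro w x _ _
    clear * -
    induction w with
    | nil => simp
    | cons q w ih =>
      have harr : (q :: w) ++ x ++ (q :: w).reverse
          = q :: (w ++ x ++ w.reverse) ++ [q] := by simp
      rw [harr, anticont_sandwich, ih]
      rw [List.length_cons]
      ring
  · intro l _ hrev
    have h1 : l.dropLast.reverse = l.tail := by
      conv_rhs => rw [← hrev]
      rcases eq_or_ne l [] with rfl | hl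
      · rfl
      · rw [← List.dropLast_append_getLast hl]
        simp
    rw [anticont, ← cont_reverse l.dropLast, h1, sub_self]
end

section
/- For any positive integers q, c, x with λ ≥ 2 being the length of the middle block, if c and x_{λ-1} are both larger than n, then [q+c, x_0, ..., x_{λ-1}, q]* > n for all choices of positive integers x_0, ..., x_{λ-2}. -/
theorem cont_ge_one : ∀ l : List ℤ, (∀ a ∈ l, 0 < a) → 1 ≤ cont l
  | [], _ => le_refl 1
  | [a], h => h a (by simp)
  | a :: b :: t, h => by
    have ha := h a (by simp)
    have h1 := cont_ge_one (b :: t) (fun x hx => h x (by simp [hx]))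
    have h2 := cont_ge_one t (fun x hx => h x (List.mem_cons_of_mem a (List.mem_cons_of_mem b hx)))
    show 1 ≤ a * cont (b :: t) + cont t
    nlinarith

theorem cont_append (a : ℤ) :
    ∀ l : List ℤ, l ≠ [] → cont (l ++ [a]) = a * cont l + cont l.dropLast
  | [x], _ => by simp [cont]; ring
  | [x, z], _ => by simp [cont]; ring
  | x :: z :: w :: t, _ => by
    have h1 := cont_append a (z :: w :: t) (by simp)
    have h2 := cont_append a (w :: t) (by simp)
    show cont (x :: z :: w :: (t ++ [a])) =
      a * cont (x :: z :: w :: t) + cont ((x :: z :: w :: t).dropLast)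
    have e1 : cont (x :: z :: w :: (t ++ [a]))
        = x * cont (z :: w :: (t ++ [a])) + cont (w :: (t ++ [a])) := rfl
    rw [e1]
    have e2 : cont (z :: w :: (t ++ [a])) = cont ((z :: w :: t) ++ [a]) := by simp
    have e3 : cont (w :: (t ++ [a])) = cont ((w :: t) ++ [a]) := by simp
    rw [e2, e3, h1, h2]
    have e4 : (x :: z :: w :: t).dropLast = x :: (z :: w :: t).dropLast := rfl
    rw [e4]
    have e5 : (z :: w :: t).dropLast = z :: (w :: t).dropLast := rfl
    have e6 : cont (x :: z :: (w :: t).dropLast)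
        = x * cont (z :: (w :: t).dropLast) + cont ((w :: t).dropLast) := rfl
    rw [e5, e6]
    have e7 : cont (x :: z :: w :: t) = x * cont (z :: w :: t) + cont (w :: t) := rfl
    rw [e7]
    ring

/-- If `c` and the last middle entry `x_{λ-1}` are both larger than `n` (with `λ ≥ 2`),
then `[q+c, x₀,…,x_{λ-1}, q]* > n` for all positive integers `x₀,…,x_{λ-2}`. -/
theorem anticont_gt (n q c xlast : ℤ) (hn : 0 < n) (hq : 0 < q) (hc : 0 < c)
    (hnc : n < c) (hnx : n < xlast)
    (y : List ℤ) (hy : y ≠ []) (hypos : ∀ a ∈ y, 0 < a) :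
    n < anticont ((q + c) :: ((y ++ [xlast]) ++ [q])) := by
  obtain ⟨y0, ys, rfl⟩ := List.exists_cons_of_ne_nil hy
  set y : List ℤ := y0 :: ys with hyd
  set L : List ℤ := y ++ [xlast] with hL
  have hLne : L ≠ [] := by simp [hL]
  have hLpos : ∀ a ∈ L, 0 < a := by
    intro a ha
    rcases List.mem_append.1 ha with h | h
    · exact hypos a h
    · simp at h; omega
  -- anticont computation
  have hdrop : ((q + c) :: (L ++ [q])).dropLast = (q + c) :: L := by
    rw [List.dropLast_cons_of_ne_nil (by simp)]
    congr 1
    exact List.dropLast_concat ..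
  have hmain : anticont ((q + c) :: (L ++ [q]))
      = cont ((q + c) :: L) - cont (L ++ [q]) := by
    unfold anticont
    rw [hdrop]
    rfl
  have hc1 : cont ((q + c) :: L) = (q + c) * cont L + cont (ys ++ [xlast]) := by
    show cont ((q + c) :: y0 :: (ys ++ [xlast])) = _
    rfl
  have hc2 : cont (L ++ [q]) = q * cont L + cont y := by
    rw [cont_append q L hLne, hL, List.dropLast_concat]
  have hc3 : cont L = xlast * cont y + cont y.dropLast := cont_append xlast y (by simp [hyd])
  have hcy : 1 ≤ cont y := cont_ge_one y hypos
  have hcd : 1 ≤ cont y.dropLast :=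
    cont_ge_one _ (fun a ha => hypos a (List.dropLast_subset y ha))
  have hct : 1 ≤ cont (ys ++ [xlast]) := by
    refine cont_ge_one _ (fun a ha => ?_)
    rcases List.mem_append.1 ha with h | h
    · exact hypos a (by simp [hyd, h])
    · simp at h; omega
  rw [hmain, hc1, hc2, hc3]
  nlinarith [mul_le_mul_of_nonneg_left hcy (by linarith : (0:ℤ) ≤ xlast - 1)]
end

section
/- Suppose α > β > 0 are relatively prime integers and the simple continued fraction expansion of α/β has quotient sequence q = (q_0, ..., q_{s-1}). Then β² + [q]*·β + (−1)^s ≡ 0 (mod α), where [q]* is the anticontinuant of q. -/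
lemma cont_det : ∀ (m : List ℤ) (a b : ℤ),
    cont (a :: b :: m) * cont ((b :: m).dropLast)
      - cont ((a :: b :: m).dropLast) * cont (b :: m) = (-1) ^ m.length := by
  intro m
  induction m with
  | nil => intro a b; simp [cont]
  | cons c m' ih =>
      intro a b
      have h1 : (a :: b :: c :: m').dropLast = a :: b :: (c :: m').dropLast := rfl
      have h2 : (b :: c :: m').dropLast = b :: (c :: m').dropLast := rfl
      rw [h1, h2]
      have e1 : cont (a :: b :: c :: m') = a * cont (b :: c :: m') + cont (c :: m') := rfl
      have e2 : cont (a :: b :: (c :: m').dropLast)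
          = a * cont (b :: (c :: m').dropLast) + cont ((c :: m').dropLast) := rfl
      have key := ih b c
      rw [h2] at key
      rw [e1, e2]
      have : m'.length + 1 = m'.length + 1 := rfl
      simp only [List.length_cons]
      linear_combination (-1 : ℤ) * key

/-- If α/β in lowest terms has continued fraction expansion with quotient sequence `l`,
then `β² + [l]*·β + (−1)^s ≡ 0 (mod α)` where `s` is the length of `l`. -/
theorem root_of_quadratic_congruence (α β : ℤ) (hβ : 0 < β) (hαβ : β < α)
    (hcop : IsCoprime α β) (l : List ℤ) (hpos : ∀ q ∈ l, 0 < q)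
    (hα : cont l = α) (hβl : cont l.tail = β) :
    α ∣ β ^ 2 + anticont l * β + (-1) ^ l.length := by
  match l with
  | [] =>
      simp [cont] at hα
      omega
  | [a] =>
      simp [cont] at hβl
      simp [anticont, cont, ← hβl]
  | a :: b :: m =>
      have key := cont_det m a b
      have htail : (a :: b :: m).tail = b :: m := rfl
      rw [htail] at hβl
      refine ⟨cont ((b :: m).dropLast), ?_⟩
      have hlen : (a :: b :: m).length = m.length + 2 := by simp
      rw [hlen]
      have hpow : (-1 : ℤ) ^ (m.length + 2) = (-1) ^ m.length := by
        rw [pow_add]; ring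
      rw [hpow]
      unfold anticont
      rw [hβl, hα] at key
      simp only [List.tail_cons]
      rw [hβl]
      linear_combination -key
end
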